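/- If (X,Y) is (p,q)-hypercontractive with p > 1 (i.e., 1 ≤ q ≤ p and ‖E[g(Y)|X]‖_p ≤ ‖g(Y)‖_q for all g), then ρ_m(X;Y)² ≤ (q-1)/(p-1). -/

import Mathlib

open Finset Real

noncomputable def fexp {Ω : Type*} [Fintype Ω] (w : Ω → ℝ) (f : Ω → ℝ) : ℝ :=
  ∑ ω, w ω * f ω

def IsProbWeight {Ω : Type*} [Fintype Ω] (w : Ω → ℝ) : Prop :=
  (∀ ω, 0 ≤ w ω) ∧ ∑ ω, w ω = 1

noncomputable def maxCorr {Ω A B : Type*} [Fintype Ω] (w : Ω → ℝ)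
    (X : Ω → A) (Y : Ω → B) : ℝ :=
  sSup { r : ℝ | ∃ f : A → ℝ, ∃ g : B → ℝ,
    fexp w (fun ω => f (X ω)) = 0 ∧ fexp w (fun ω => g (Y ω)) = 0 ∧
    fexp w (fun ω => (f (X ω))^2) ≤ 1 ∧ fexp w (fun ω => (g (Y ω))^2) ≤ 1 ∧
    r = fexp w (fun ω => f (X ω) * g (Y ω)) }

noncomputable def condExpOn {Ω A : Type*} [Fintype Ω] [DecidableEq A]
    (w : Ω → ℝ) (X : Ω → A) (h : Ω → ℝ) (ω : Ω) : ℝ :=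
  (∑ ωp, if X ωp = X ω then w ωp * h ωp else 0) / (∑ ωp, if X ωp = X ω then w ωp else 0)

section Aux

open Filter Topology

lemma hc_core_limit (p : ℝ) :
    Tendsto (fun y : ℝ => ((1+y)^p - 1 - p*y)/y^2) (𝓝[≠] 0)
      (𝓝 (p*(p-1)/2)) := by
  have hssub : ∀ᶠ y in 𝓝 (0:ℝ), (-1:ℝ) < y := eventually_gt_nhds (by norm_num)
  have hff' : ∀ᶠ y in 𝓝 (0:ℝ), HasDerivAt (fun y : ℝ => (1+y)^p - 1 - p*y)
      (p*(1+y)^(p-1) - p) y := by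
    filter_upwards [hssub] with y hy
    have h1 : HasDerivAt (fun y : ℝ => 1 + y) 1 y := (hasDerivAt_id y).const_add 1
    have h2 : HasDerivAt (fun y : ℝ => (1+y)^p) (p*(1+y)^(p-1)*1) y :=
      (Real.hasDerivAt_rpow_const (Or.inl (by linarith))).comp y h1
    have h3 : HasDerivAt (fun y : ℝ => p*y) p y := by
      simpa using (hasDerivAt_id y).const_mul p
    have h4 := (h2.sub_const 1).sub h3
    simp only [mul_one] at h4
    exact h4
  have hgg' : ∀ᶠ y in 𝓝 (0:ℝ), HasDerivAt (fun y : ℝ => y^2) (2*y) y := by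
    filter_upwards with y
    simpa [mul_comm] using hasDerivAt_pow 2 y
  have hg' : ∀ᶠ y in 𝓝[≠] (0:ℝ), 2*y ≠ 0 := by
    filter_upwards [self_mem_nhdsWithin] with y hy
    simp only [Set.mem_compl_iff, Set.mem_singleton_iff] at hy
    exact mul_ne_zero two_ne_zero hy
  have hfa : Tendsto (fun y : ℝ => (1+y)^p - 1 - p*y) (𝓝 0) (𝓝 0) := by
    have hc : ContinuousAt (fun y : ℝ => (1+y)^p - 1 - p*y) 0 := by
      have : ContinuousAt (fun y : ℝ => (1+y)^p) 0 := by
        exact (Real.continuousAt_rpow_const _ _ (by norm_num)).comp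
          (by fun_prop)
      fun_prop
    simpa using hc.tendsto
  have hga : Tendsto (fun y : ℝ => y^2) (𝓝 0) (𝓝 0) := by
    simpa using (continuous_pow 2).tendsto (0:ℝ)
  have hslope : Tendsto (fun y : ℝ => ((1+y)^(p-1) - 1)/y) (𝓝[≠] 0) (𝓝 (p-1)) := by
    have hF : HasDerivAt (fun y : ℝ => (1+y)^(p-1)) ((p-1)*(1+(0:ℝ))^(p-1-1)*1) 0 :=
      (Real.hasDerivAt_rpow_const (p := p-1) (Or.inl (by norm_num))).comp 0
        ((hasDerivAt_id 0).const_add 1)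
    have := hasDerivAt_iff_tendsto_slope.mp hF
    simp only [slope_fun_def_field, add_zero, Real.one_rpow, mul_one, sub_zero] at this
    simpa using this
  have hdiv : Tendsto (fun y : ℝ => (p*(1+y)^(p-1) - p)/(2*y)) (𝓝[≠] 0) (𝓝 (p*(p-1)/2)) := by
    have heq : (fun y : ℝ => (p*(1+y)^(p-1) - p)/(2*y))
        = fun y : ℝ => (p/2) * (((1+y)^(p-1) - 1)/y) := by
      funext y
      rw [div_mul_div_comm]
      ring_nf
    rw [heq]
    have := hslope.const_mul (p/2)
    convert this using 2
    ring
  exact HasDerivAt.lhopital_zero_nhdsNE (hff'.filter_mono nhdsWithin_le_nhds)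
    (hgg'.filter_mono nhdsWithin_le_nhds) hg' (hfa.mono_left nhdsWithin_le_nhds)
    (hga.mono_left nhdsWithin_le_nhds) hdiv

lemma hc_pt_limit (p x : ℝ) :
    Tendsto (fun ε : ℝ => ((1+ε*x)^p - 1 - p*(ε*x))/ε^2) (𝓝[≠] 0)
      (𝓝 (p*(p-1)/2 * x^2)) := by
  rcases eq_or_ne x 0 with rfl | hx
  · simpa using tendsto_const_nhds (x := (0:ℝ)) (f := 𝓝[≠] (0:ℝ))
  · have hcomp : Tendsto (fun ε : ℝ => ε*x) (𝓝[≠] 0) (𝓝[≠] 0) := by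
      have h1 : Tendsto (fun ε : ℝ => ε*x) (𝓝 0) (𝓝 0) := by
        exact (continuous_id.mul continuous_const).tendsto' (0:ℝ) 0 (by simp)
      have h2 : Tendsto (fun ε : ℝ => ε*x) (𝓟 {(0:ℝ)}ᶜ) (𝓟 {(0:ℝ)}ᶜ) :=
        tendsto_principal_principal.2 fun ε hε => by
          simp only [Set.mem_compl_iff, Set.mem_singleton_iff] at hε ⊢
          exact mul_ne_zero hε hx
      exact h1.inf h2
    have hthis := ((hc_core_limit p).comp hcomp).const_mul (x^2)
    have heq : (fun ε : ℝ => x^2 * (((1+ε*x)^p - 1 - p*(ε*x))/(ε*x)^2))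
        = fun ε : ℝ => ((1+ε*x)^p - 1 - p*(ε*x))/ε^2 := by
      funext ε
      rw [mul_pow, ← div_div, mul_comm, div_mul_cancel₀ _ (pow_ne_zero 2 hx)]
    rw [mul_comm] at hthis
    simpa [heq, Function.comp] using hthis

lemma hc_sum_limit {Ω : Type*} [Fintype Ω] (w v : Ω → ℝ)
    (hw1 : ∑ ω, w ω = 1) (hv : ∑ ω, w ω * v ω = 0) (p : ℝ) :
    Tendsto (fun ε : ℝ => ((∑ ω, w ω * |1+ε*v ω|^p) - 1)/ε^2) (𝓝[≠] 0)
      (𝓝 (p*(p-1)/2 * ∑ ω, w ω * (v ω)^2)) := by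
  have hlim : Tendsto (fun ε : ℝ => ∑ ω, w ω * (((1+ε*v ω)^p - 1 - p*(ε*v ω))/ε^2))
      (𝓝[≠] 0) (𝓝 (∑ ω, w ω * (p*(p-1)/2 * (v ω)^2))) := by
    apply tendsto_finset_sum
    intro ω _
    exact (hc_pt_limit p (v ω)).const_mul (w ω)
  have hsum : ∑ ω, w ω * (p*(p-1)/2 * (v ω)^2) = p*(p-1)/2 * ∑ ω, w ω * (v ω)^2 := by
    rw [Finset.mul_sum]; exact Finset.sum_congr rfl fun ω _ => by ring
  rw [hsum] at hlim
  apply hlim.congr'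
  set M : ℝ := ∑ ω, |v ω| with hM
  have hM0 : 0 ≤ M := Finset.sum_nonneg fun ω _ => abs_nonneg _
  have hδ : 0 < 1/(M+1) := by positivity
  have hball : ∀ᶠ ε : ℝ in 𝓝 0, |ε| < 1/(M+1) := by
    filter_upwards [Metric.ball_mem_nhds (0:ℝ) hδ] with ε hε
    simpa [Real.dist_eq] using hε
  filter_upwards [hball.filter_mono nhdsWithin_le_nhds] with ε hε
  have hpos : ∀ ω, 0 < 1 + ε * v ω := by
    intro ω
    have h1 : |v ω| ≤ M :=
      Finset.single_le_sum (f := fun ω => |v ω|) (fun ω _ => abs_nonneg _) (Finset.mem_univ ω)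
    have h2 : |ε| * (M+1) < 1 := (lt_div_iff₀ (by linarith)).mp hε
    have h3 : |ε * v ω| < 1 := by
      rw [abs_mul]
      nlinarith [abs_nonneg ε, abs_nonneg (v ω)]
    have := abs_lt.mp h3
    linarith [this.1]
  have heq1 : ∑ ω, w ω * (((1+ε*v ω)^p - 1 - p*(ε*v ω))/ε^2)
      = (∑ ω, (w ω * (1+ε*v ω)^p - w ω - p*ε*(w ω * v ω)))/ε^2 := by
    rw [Finset.sum_div]; exact Finset.sum_congr rfl fun ω _ => by ring
  have heq2 : (∑ ω, w ω * |1+ε*v ω|^p) = ∑ ω, w ω * (1+ε*v ω)^p :=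
    Finset.sum_congr rfl fun ω _ => by rw [abs_of_pos (hpos ω)]
  rw [heq1, Finset.sum_sub_distrib, Finset.sum_sub_distrib, ← Finset.mul_sum, hv, hw1,
    mul_zero, sub_zero, heq2]

lemma hc_one_le_wsum {Ω : Type*} [Fintype Ω] (w v : Ω → ℝ) (hw0 : ∀ ω, 0 ≤ w ω)
    (hw1 : ∑ ω, w ω = 1) (hv : ∑ ω, w ω * v ω = 0) {r : ℝ} (hr : 1 ≤ r) (ε : ℝ) :
    1 ≤ ∑ ω, w ω * |1+ε*v ω|^r := by
  have j1 : ∑ ω, w ω * (1+ε*v ω) = 1 := by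
    have hco : ∀ ω ∈ univ, w ω * (1+ε*v ω) = w ω + ε*(w ω * v ω) := fun ω _ => by ring
    rw [Finset.sum_congr rfl hco, Finset.sum_add_distrib, ← Finset.mul_sum, hv, hw1,
      mul_zero, add_zero]
  have j2 : 1 ≤ ∑ ω, w ω * |1+ε*v ω| := by
    calc (1:ℝ) = ∑ ω, w ω * (1+ε*v ω) := j1.symm
      _ ≤ ∑ ω, w ω * |1+ε*v ω| :=
        Finset.sum_le_sum fun ω _ => mul_le_mul_of_nonneg_left (le_abs_self _) (hw0 ω)
  calc (1:ℝ) = 1 ^ r := (Real.one_rpow r).symm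
    _ ≤ (∑ ω, w ω * |1+ε*v ω|) ^ r := Real.rpow_le_rpow zero_le_one j2 (by linarith)
    _ ≤ _ := Real.rpow_arith_mean_le_arith_mean_rpow univ w (fun ω => |1+ε*v ω|)
        (fun ω _ => hw0 ω) hw1 (fun ω _ => abs_nonneg _) hr

lemma hc_core_ineq {Ω : Type*} [Fintype Ω] (w u g : Ω → ℝ)
    (hw0 : ∀ ω, 0 ≤ w ω) (hw1 : ∑ ω, w ω = 1)
    (hu : ∑ ω, w ω * u ω = 0) (hg : ∑ ω, w ω * g ω = 0)
    (p q : ℝ) (hq : 1 ≤ q) (hp : 1 < p)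
    (hAB : ∀ ε : ℝ, (∑ ω, w ω * |1+ε*u ω|^p) ^ (1/p) ≤ (∑ ω, w ω * |1+ε*g ω|^q) ^ (1/q)) :
    (p-1) * ∑ ω, w ω * (u ω)^2 ≤ (q-1) * ∑ ω, w ω * (g ω)^2 := by
  have hq0 : 0 < q := by linarith
  have hp0 : 0 < p := by linarith
  set A : ℝ → ℝ := fun ε => ∑ ω, w ω * |1+ε*u ω|^p with hAdef
  set B : ℝ → ℝ := fun ε => ∑ ω, w ω * |1+ε*g ω|^q with hBdef
  have hA1 : ∀ ε, 1 ≤ A ε := fun ε => hc_one_le_wsum w u hw0 hw1 hu hp.le ε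
  have hB1 : ∀ ε, 1 ≤ B ε := fun ε => hc_one_le_wsum w g hw0 hw1 hg hq ε
  have key : ∀ ε : ℝ, (A ε - 1)/(p * A ε) ≤ (B ε - 1)/q := by
    intro ε
    have haA : 1 ≤ A ε := hA1 ε
    have hbB : 1 ≤ B ε := hB1 ε
    have hApos : 0 < A ε := by linarith
    have hup : B ε ^ (1/q) ≤ 1 + (1/q) * (B ε - 1) := by
      have := rpow_one_add_le_one_add_mul_self (s := B ε - 1) (by linarith)
        (p := 1/q) (by positivity) (by rw [div_le_one hq0]; exact hq)
      simpa using this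
    set x : ℝ := (A ε - 1)/(p * A ε) with hx
    have hx0 : 0 ≤ x := div_nonneg (by linarith) (by positivity)
    have hx1 : x < 1 := by
      rw [hx, div_lt_one (by positivity)]
      nlinarith
    have hlow : 1 + x ≤ A ε ^ (1/p) := by
      have hinv : (A ε)⁻¹ ^ (1/p) ≤ 1 + (1/p) * ((A ε)⁻¹ - 1) := by
        have := rpow_one_add_le_one_add_mul_self (s := (A ε)⁻¹ - 1)
          (by have h7 := inv_pos.mpr hApos; linarith)
          (p := 1/p) (by positivity) (by rw [div_le_one hp0]; exact hp.le)
        simpa using this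
      have hm : 1 + (1/p) * ((A ε)⁻¹ - 1) = 1 - x := by
        rw [hx]; field_simp; ring
      rw [hm] at hinv
      have hxpos : 0 < 1 - x := by linarith
      have hrp : 0 < A ε ^ (1/p) := Real.rpow_pos_of_pos hApos _
      have hinv2 : (A ε ^ (1/p))⁻¹ ≤ 1 - x := by
        rw [← Real.inv_rpow hApos.le]; exact hinv
      have h1 : 1 ≤ (1 - x) * A ε ^ (1/p) := by
        calc (1:ℝ) = (A ε ^ (1/p))⁻¹ * A ε ^ (1/p) := by rw [inv_mul_cancel₀ hrp.ne']
          _ ≤ (1 - x) * A ε ^ (1/p) := mul_le_mul_of_nonneg_right hinv2 hrp.le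
      nlinarith
    have h8 := (hlow.trans (hAB ε)).trans hup
    have h9 : x ≤ (1/q) * (B ε - 1) := by linarith
    calc (A ε - 1)/(p * A ε) = x := rfl
      _ ≤ (1/q) * (B ε - 1) := h9
      _ = (B ε - 1)/q := by ring
  have hLA := hc_sum_limit w u hw1 hu p
  have hLB := hc_sum_limit w g hw1 hg q
  have hsq : Tendsto (fun ε : ℝ => ε^2) (𝓝[≠] (0:ℝ)) (𝓝 0) := by
    have := (continuous_pow 2).tendsto (0:ℝ)
    simpa using this.mono_left nhdsWithin_le_nhds
  have hAto1 : Tendsto A (𝓝[≠] (0:ℝ)) (𝓝 1) := by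
    have h1 : Tendsto (fun ε : ℝ => ((A ε - 1)/ε^2) * ε^2) (𝓝[≠] (0:ℝ)) (𝓝 0) := by
      have := hLA.mul hsq
      simpa using this
    have h2 : Tendsto (fun ε : ℝ => A ε - 1) (𝓝[≠] (0:ℝ)) (𝓝 0) := by
      apply h1.congr'
      filter_upwards [self_mem_nhdsWithin] with ε hε
      simp only [Set.mem_compl_iff, Set.mem_singleton_iff] at hε
      field_simp
    have := h2.add_const 1
    simpa using this
  set a : ℝ := ∑ ω, w ω * (u ω)^2 with ha
  set b : ℝ := ∑ ω, w ω * (g ω)^2 with hb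
  have hL : Tendsto (fun ε : ℝ => ((A ε - 1)/ε^2) * (p * A ε)⁻¹) (𝓝[≠] (0:ℝ))
      (𝓝 ((p*(p-1)/2 * a) * (p * 1)⁻¹)) := by
    apply hLA.mul
    have hc : Tendsto (fun ε : ℝ => p * A ε) (𝓝[≠] (0:ℝ)) (𝓝 (p * 1)) :=
      hAto1.const_mul p
    exact hc.inv₀ (by simp [hp0.ne'])
  have hR : Tendsto (fun ε : ℝ => ((B ε - 1)/ε^2) * (1/q)) (𝓝[≠] (0:ℝ))
      (𝓝 ((q*(q-1)/2 * b) * (1/q))) := hLB.mul_const _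
  have hle : ((p*(p-1)/2 * a) * (p * 1)⁻¹) ≤ ((q*(q-1)/2 * b) * (1/q)) := by
    refine le_of_tendsto_of_tendsto' hL hR ?_
    intro ε
    have hεkey := key ε
    have h1 : (A ε - 1)/(p * A ε) * (ε^2)⁻¹ ≤ (B ε - 1)/q * (ε^2)⁻¹ :=
      mul_le_mul_of_nonneg_right hεkey (by positivity)
    calc ((A ε - 1)/ε^2) * (p * A ε)⁻¹ = (A ε - 1)/(p * A ε) * (ε^2)⁻¹ := by ring
      _ ≤ (B ε - 1)/q * (ε^2)⁻¹ := h1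
      _ = ((B ε - 1)/ε^2) * (1/q) := by ring
  have e1 : (p*(p-1)/2 * a) * (p * 1)⁻¹ = (p-1) * a / 2 := by
    field_simp
  have e2 : (q*(q-1)/2 * b) * (1/q) = (q-1) * b / 2 := by
    field_simp
  rw [e1, e2] at hle
  linarith

section Tower
variable {Ω A : Type*} [Fintype Ω] [Fintype A] [DecidableEq A]
  (w : Ω → ℝ) (X : Ω → A)

lemma hc_group_sum (v : Ω → ℝ) (G : A → ℝ) :
    ∑ ω, v ω * G (X ω) = ∑ a, (∑ ω, if X ω = a then v ω else 0) * G a := by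
  have h : ∀ ω, v ω * G (X ω) = ∑ a, if X ω = a then v ω * G a else 0 := by
    intro ω
    rw [Finset.sum_ite_eq univ (X ω) (fun a => v ω * G a)]
    simp
  simp_rw [h]
  rw [Finset.sum_comm]
  congr 1
  funext a
  rw [Finset.sum_mul]
  congr 1
  funext ω
  split <;> simp

lemma hc_tower (hw0 : ∀ ω, 0 ≤ w ω) (f : A → ℝ) (h : Ω → ℝ) :
    ∑ ω, w ω * (f (X ω) * condExpOn w X h ω) = ∑ ω, w ω * (f (X ω) * h ω) := by
  set N : A → ℝ := fun a => ∑ ωp, if X ωp = a then w ωp * h ωp else 0 with hN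
  set D : A → ℝ := fun a => ∑ ωp, if X ωp = a then w ωp else 0 with hD
  have hce : ∀ ω, condExpOn w X h ω = N (X ω) / D (X ω) := fun ω => rfl
  have hL : ∑ ω, w ω * (f (X ω) * condExpOn w X h ω)
      = ∑ a, D a * (f a * (N a / D a)) := by
    have := hc_group_sum X w (fun a => f a * (N a / D a))
    rw [← this]
    exact Finset.sum_congr rfl fun ω _ => by rw [hce]
  have hR : ∑ ω, w ω * (f (X ω) * h ω) = ∑ a, N a * f a := by
    have := hc_group_sum X (fun ω => w ω * h ω) f
    rw [← this]
    · exact Finset.sum_congr rfl fun ω _ => by ring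
  rw [hL, hR]
  apply Finset.sum_congr rfl
  intro a _
  rcases eq_or_ne (D a) 0 with hDa | hDa
  · have hNa : N a = 0 := by
      have hallw : ∀ ωp ∈ univ, (if X ωp = a then w ωp else 0) = 0 := by
        rw [← Finset.sum_eq_zero_iff_of_nonneg
          (fun ωp _ => by split; exacts [hw0 ωp, le_rfl])]
        exact hDa
      apply Finset.sum_eq_zero
      intro ωp _
      have := hallw ωp (mem_univ ωp)
      split at this <;> split <;> simp_all
    rw [hDa, hNa]; ring
  · field_simp
end Tower

lemma hc_condexp_linear {Ω A : Type*} [Fintype Ω] [DecidableEq A]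
    (w : Ω → ℝ) (X : Ω → A) (hw0 : ∀ ω, 0 ≤ w ω) (h : Ω → ℝ) (ε : ℝ) (ω : Ω)
    (hωw : w ω ≠ 0) :
    condExpOn w X (fun ωp => 1 + ε * h ωp) ω = 1 + ε * condExpOn w X h ω := by
  set D : ℝ := ∑ ωp, if X ωp = X ω then w ωp else 0 with hD
  have hDpos : 0 < D := by
    have h1 : w ω ≤ D := by
      have := Finset.single_le_sum (f := fun ωp => if X ωp = X ω then w ωp else 0)
        (fun ωp _ => by split; exacts [hw0 ωp, le_rfl]) (Finset.mem_univ ω)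
      simpa using this
    rcases (hw0 ω).lt_or_eq with h | h
    · linarith
    · exact absurd h.symm hωw
  have hnum : (∑ ωp, if X ωp = X ω then w ωp * (1 + ε * h ωp) else 0)
      = D + ε * ∑ ωp, if X ωp = X ω then w ωp * h ωp else 0 := by
    rw [hD, Finset.mul_sum, ← Finset.sum_add_distrib]
    apply Finset.sum_congr rfl
    intro ωp _
    split <;> ring
  show (∑ ωp, if X ωp = X ω then w ωp * (1 + ε * h ωp) else 0) / D = _
  rw [hnum, add_div, div_self hDpos.ne', mul_div_assoc]
  rfl

end Aux

theorem hc_implies_maxCorr_sq_bound {Ω A B : Type*} [Fintype Ω] [Fintype A] [Fintype B]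
    [DecidableEq A]
    (w : Ω → ℝ) (hw : IsProbWeight w) (X : Ω → A) (Y : Ω → B)
    (p q : ℝ) (hq : 1 ≤ q) (hqp : q ≤ p) (hp : 1 < p)
    (hhc : ∀ g : B → ℝ,
      (fexp w (fun ω => |condExpOn w X (fun ωp => g (Y ωp)) ω| ^ p)) ^ (1/p)
        ≤ (fexp w (fun ω => |g (Y ω)| ^ q)) ^ (1/q)) :
    (maxCorr w X Y)^2 ≤ (q - 1) / (p - 1) := by
  classical
  obtain ⟨hw0, hw1⟩ := hw
  have hc0 : (0:ℝ) ≤ (q-1)/(p-1) := div_nonneg (by linarith) (by linarith)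
  set S : Set ℝ := { r : ℝ | ∃ f : A → ℝ, ∃ g : B → ℝ,
    fexp w (fun ω => f (X ω)) = 0 ∧ fexp w (fun ω => g (Y ω)) = 0 ∧
    fexp w (fun ω => (f (X ω))^2) ≤ 1 ∧ fexp w (fun ω => (g (Y ω))^2) ≤ 1 ∧
    r = fexp w (fun ω => f (X ω) * g (Y ω)) } with hS
  have hmc : maxCorr w X Y = sSup S := rfl
  have h0S : (0:ℝ) ∈ S := by
    refine ⟨fun _ => 0, fun _ => 0, ?_, ?_, ?_, ?_, ?_⟩ <;> simp [fexp]
  have hub : ∀ r ∈ S, r ≤ Real.sqrt ((q-1)/(p-1)) := by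
    rintro r ⟨f, g, hf0, hg0, hf2, hg2, hr⟩
    set u : Ω → ℝ := condExpOn w X (fun ωp => g (Y ωp)) with hudef
    have hgy0 : ∑ ω, w ω * g (Y ω) = 0 := hg0
    have hu0 : ∑ ω, w ω * u ω = 0 := by
      have htw := hc_tower w X hw0 (fun _ => 1) (fun ωp => g (Y ωp))
      simp only [one_mul] at htw
      rw [htw]
      exact hgy0
    have hkey : (p-1) * ∑ ω, w ω * (u ω)^2 ≤ (q-1) * ∑ ω, w ω * (g (Y ω))^2 := by
      apply hc_core_ineq w u (fun ω => g (Y ω)) hw0 hw1 hu0 hgy0 p q hq hp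
      intro ε
      have h1 := hhc (fun b => 1 + ε * g b)
      simp only [fexp] at h1
      have h2 : (∑ ω, w ω * |condExpOn w X (fun ωp => 1 + ε * g (Y ωp)) ω| ^ p)
          = ∑ ω, w ω * |1+ε*u ω|^p := by
        apply Finset.sum_congr rfl
        intro ω _
        rcases eq_or_ne (w ω) 0 with h | h
        · rw [h]; ring
        · rw [hc_condexp_linear w X hw0 (fun ωp => g (Y ωp)) ε ω h]
      rw [h2] at h1
      exact h1
    have ha0 : 0 ≤ ∑ ω, w ω * (u ω)^2 :=
      Finset.sum_nonneg fun ω _ => mul_nonneg (hw0 ω) (sq_nonneg _)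
    have hb1 : ∑ ω, w ω * (g (Y ω))^2 ≤ 1 := hg2
    have ha2 : ∑ ω, w ω * (u ω)^2 ≤ (q-1)/(p-1) := by
      rw [le_div_iff₀ (by linarith : (0:ℝ) < p - 1)]
      nlinarith
    have hrr : r = ∑ ω, (Real.sqrt (w ω) * f (X ω)) * (Real.sqrt (w ω) * u ω) := by
      have htw := hc_tower w X hw0 f (fun ωp => g (Y ωp))
      have hr' : r = ∑ ω, w ω * (f (X ω) * g (Y ω)) := hr
      rw [hr', ← htw]
      apply Finset.sum_congr rfl
      intro ω _
      rw [mul_mul_mul_comm, Real.mul_self_sqrt (hw0 ω)]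
    have hcs := Finset.sum_mul_sq_le_sq_mul_sq univ
      (fun ω => Real.sqrt (w ω) * f (X ω)) (fun ω => Real.sqrt (w ω) * u ω)
    have hsq1 : ∑ ω, (Real.sqrt (w ω) * f (X ω))^2 = ∑ ω, w ω * (f (X ω))^2 :=
      Finset.sum_congr rfl fun ω _ => by
        rw [mul_pow, Real.sq_sqrt (hw0 ω)]
    have hsq2 : ∑ ω, (Real.sqrt (w ω) * u ω)^2 = ∑ ω, w ω * (u ω)^2 :=
      Finset.sum_congr rfl fun ω _ => by
        rw [mul_pow, Real.sq_sqrt (hw0 ω)]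
    have hf2' : ∑ ω, w ω * (f (X ω))^2 ≤ 1 := hf2
    have hr2 : r^2 ≤ (q-1)/(p-1) := by
      rw [hrr]
      calc (∑ ω, (Real.sqrt (w ω) * f (X ω)) * (Real.sqrt (w ω) * u ω))^2
          ≤ (∑ ω, (Real.sqrt (w ω) * f (X ω))^2) * ∑ ω, (Real.sqrt (w ω) * u ω)^2 := hcs
        _ = (∑ ω, w ω * (f (X ω))^2) * ∑ ω, w ω * (u ω)^2 := by rw [hsq1, hsq2]
        _ ≤ 1 * ((q-1)/(p-1)) := by
            apply mul_le_mul hf2' ha2 ha0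
            norm_num
        _ = (q-1)/(p-1) := one_mul _
    calc r ≤ |r| := le_abs_self r
      _ = Real.sqrt (r^2) := (Real.sqrt_sq_eq_abs r).symm
      _ ≤ Real.sqrt ((q-1)/(p-1)) := Real.sqrt_le_sqrt hr2
  have hbdd : BddAbove S := ⟨_, hub⟩
  have h1 : sSup S ≤ Real.sqrt ((q-1)/(p-1)) := csSup_le ⟨0, h0S⟩ hub
  have h2 : 0 ≤ sSup S := le_csSup hbdd h0S
  have h3 : (Real.sqrt ((q-1)/(p-1)))^2 = (q-1)/(p-1) := Real.sq_sqrt hc0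
  rw [hmc]
  nlinarith
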